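/- Let γ > 1, M1 > M2 > 0, ε = (√(M1·M2)/3)·(M1−M2)/(M1+M2), ρ̃² = (M1/M2)^((γ−1)/(2γ)). Then (M2+ε)^(γ−1)·(ρ̃²)^γ < (M1−ε)^(γ−1), i.e. p² < p¹ in the counterexample of Section 5.1. -/

import Mathlib

theorem stmt_19 (γ M1 M2 ε ρt2 : ℝ) (hγ : 1 < γ) (hM2 : 0 < M2) (hM : M2 < M1)
    (hε : ε = (Real.sqrt (M1 * M2) / 3) * (M1 - M2) / (M1 + M2))
    (hρt2 : ρt2 = (M1 / M2) ^ ((γ - 1) / (2 * γ))) :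
    (M2 + ε) ^ (γ - 1) * ρt2 ^ γ < (M1 - ε) ^ (γ - 1) := by
  have hM1 : 0 < M1 := hM2.trans hM
  set a := Real.sqrt M1 with ha
  set b := Real.sqrt M2 with hb
  have hb0 : 0 < b := Real.sqrt_pos.2 hM2
  have ha0 : 0 < a := Real.sqrt_pos.2 hM1
  have hba : b < a := Real.sqrt_lt_sqrt hM2.le hM
  have ha2 : a ^ 2 = M1 := Real.sq_sqrt hM1.le
  have hb2 : b ^ 2 = M2 := Real.sq_sqrt hM2.le
  have hsab : Real.sqrt (M1 * M2) = a * b := Real.sqrt_mul hM1.le M2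
  have hsd : Real.sqrt (M1 / M2) = a / b := Real.sqrt_div hM1.le M2
  have hεpos : 0 < ε := by
    rw [hε, hsab]
    have h1 : 0 < M1 - M2 := by linarith
    have h2 : 0 < M1 + M2 := by linarith
    positivity
  have hεval : ε = (a * b / 3) * (a ^ 2 - b ^ 2) / (a ^ 2 + b ^ 2) := by
    rw [hε, hsab, ha2, hb2]
  have key : (M2 + ε) * Real.sqrt (M1 / M2) < M1 - ε := by
    rw [hsd, hεval, ← ha2, ← hb2]
    have hab : 0 < a - b := by linarith
    have hs : (0:ℝ) < a ^ 2 + b ^ 2 := by positivity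
    rw [← sub_pos]
    have hid : a ^ 2 - (a * b / 3) * (a ^ 2 - b ^ 2) / (a ^ 2 + b ^ 2)
        - (b ^ 2 + (a * b / 3) * (a ^ 2 - b ^ 2) / (a ^ 2 + b ^ 2)) * (a / b)
        = a * (a - b) * ((a ^ 2 + b ^ 2 + (a - b) ^ 2)) / (3 * (a ^ 2 + b ^ 2)) := by
      field_simp
      ring
    rw [hid]
    apply div_pos
    · have := mul_pos (mul_pos ha0 hab) (by positivity : (0:ℝ) < a ^ 2 + b ^ 2 + (a - b) ^ 2)
      linarith
    · positivity
  -- rewrite LHS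
  have hγ0 : γ ≠ 0 := by linarith
  have hq : 0 < M1 / M2 := div_pos hM1 hM2
  have hρ : ρt2 ^ γ = Real.sqrt (M1 / M2) ^ (γ - 1) := by
    rw [hρt2]
    rw [← Real.rpow_mul hq.le]
    have he : (γ - 1) / (2 * γ) * γ = (1/2) * (γ - 1) := by
      field_simp
    rw [he, Real.rpow_mul hq.le, Real.sqrt_eq_rpow]
  rw [hρ, ← Real.mul_rpow (by positivity) (Real.sqrt_nonneg _)]
  exact Real.rpow_lt_rpow (by positivity) key (by linarith)
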